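/- Let r ≥ 2, j ≥ 0 be integers, N a positive integer, B = N^(1/(r+2)) * 2^(−(2r+1)j/3) > 1, and suppose N = p^r * q with 2^j * N^(1/(r+2)) ≤ p ≤ 2^(j+1) * N^(1/(r+2)). Then there exist positive integers a, b with a ≤ ⌈2^((r+2)j/3 + r + 1)⌉, b ≤ B, and a*q + r*b*p − (r+1)*(a*b^r*N)^(1/(r+1)) < (r^(r+3/2)/sqrt(a*b)) * N^(1/(2(r+2))) * 2^((1−r)j/6 − 1). -/

import Mathlib

open Finset in
lemma aux_identity (v : ℝ) : ∀ r : ℕ,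
    (1 - v)^2 * ∑ i ∈ range r, (i+1 : ℝ) * v^i = 1 + r * v^(r+1) - (r+1) * v^r := by
  intro r
  induction r with
  | zero => simp
  | succ n ih =>
    rw [sum_range_succ, mul_add, ih]
    push_cast
    ring

open Finset in
lemma aux_sum_le (v : ℝ) (hv : 0 ≤ v) (r : ℕ) :
    ∑ i ∈ range r, (i+1 : ℝ) * v^i ≤ (∑ i ∈ range (r+1), v^i)^2 := by
  have h1 : ∑ i ∈ range r, (i+1 : ℝ) * v^i
      = ∑ p ∈ (range r).sigma (fun i => range (i+1)), v ^ p.1 := by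
    rw [Finset.sum_sigma]
    refine Finset.sum_congr rfl fun i _ => ?_
    simp [mul_comm]
  have h2 : ∑ p ∈ (range r).sigma (fun i => range (i+1)), v ^ p.1
      = ∑ p ∈ ((range (r+1)) ×ˢ (range (r+1))).filter (fun p : ℕ × ℕ => p.1 + p.2 < r),
          v ^ p.1 * v ^ p.2 := by
    refine Finset.sum_nbij' (fun p => (p.2, p.1 - p.2)) (fun p => ⟨p.1 + p.2, p.1⟩)
      ?_ ?_ ?_ ?_ ?_
    · rintro ⟨i, k⟩ hik
      simp only [Finset.mem_sigma, Finset.mem_range] at hik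
      simp only [Finset.mem_filter, Finset.mem_product, Finset.mem_range]
      omega
    · rintro ⟨i, k⟩ hik
      simp only [Finset.mem_filter, Finset.mem_product, Finset.mem_range] at hik
      simp only [Finset.mem_sigma, Finset.mem_range]
      omega
    · rintro ⟨i, k⟩ hik
      simp only [Finset.mem_sigma, Finset.mem_range] at hik
      simp only [Sigma.mk.inj_iff]
      constructor
      · omega
      · exact heq_of_eq rfl
    · rintro ⟨i, k⟩ hik
      simp only [Finset.mem_filter, Finset.mem_product, Finset.mem_range] at hik
      simp
    · rintro ⟨i, k⟩ hik
      simp only [Finset.mem_sigma, Finset.mem_range] at hik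
      dsimp only
      rw [← pow_add]
      congr 1
      omega
  rw [h1, h2, sq, Finset.sum_mul_sum]
  rw [← Finset.sum_product']
  refine Finset.sum_le_sum_of_subset_of_nonneg (Finset.filter_subset _ _) ?_
  intro p _ _
  positivity

open Finset in
lemma aux_F_bound (r : ℕ) (hr : 2 ≤ r) (X Y : ℝ) (hX : 0 < X) (hY : 0 < Y) :
    X^(r+1) + r*Y^(r+1) - (r+1)*(X*Y^r) ≤ (r:ℝ)/2 * (X^(r+1) - Y^(r+1))^2 / X^(r+1) := by
  rw [le_div_iff₀ (by positivity : (0:ℝ) < X^(r+1))]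
  set v : ℝ := Y / X with hv
  have hv0 : 0 ≤ v := by positivity
  have hXne : X ≠ 0 := ne_of_gt hX
  have e1 : X^(r+1) + r*Y^(r+1) - (r+1)*(X*Y^r)
      = X^(r+1) * (1 + r * v^(r+1) - (r+1) * v^r) := by
    rw [hv, div_pow, div_pow]; field_simp
    ring
  have e2 : X^(r+1) - Y^(r+1) = X^(r+1) * (1 - v^(r+1)) := by
    rw [hv, div_pow]; field_simp
  have e3 : 1 - v^(r+1) = (1 - v) * ∑ i ∈ range (r+1), v^i := by
    have := geom_sum_mul v (r+1)
    linarith [this]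
  have key : 1 + r * v^(r+1) - (r+1) * v^r ≤ (r:ℝ)/2 * (1 - v^(r+1))^2 := by
    rw [← aux_identity v r, e3, mul_pow]
    have h1 := aux_sum_le v hv0 r
    have h2 : (0:ℝ) ≤ (1 - v)^2 := sq_nonneg _
    have h3 : (1:ℝ) ≤ (r:ℝ)/2 := by
      have : (2:ℝ) ≤ r := by exact_mod_cast hr
      linarith
    have h4 : (0:ℝ) ≤ (∑ i ∈ range (r+1), v^i)^2 := sq_nonneg _
    calc (1 - v)^2 * ∑ i ∈ range r, (i+1 : ℝ) * v^i
        ≤ (1 - v)^2 * (∑ i ∈ range (r+1), v^i)^2 := by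
          exact mul_le_mul_of_nonneg_left h1 h2
      _ ≤ (r:ℝ)/2 * ((1 - v)^2 * (∑ i ∈ range (r+1), v^i)^2) :=
          le_mul_of_one_le_left (mul_nonneg h2 h4) h3
  calc (X^(r+1) + r*Y^(r+1) - (r+1)*(X*Y^r)) * X^(r+1)
      = (1 + r * v^(r+1) - (r+1) * v^r) * (X^(r+1))^2 := by rw [e1]; ring
    _ ≤ ((r:ℝ)/2 * (1 - v^(r+1))^2) * (X^(r+1))^2 := by
        exact mul_le_mul_of_nonneg_right key (by positivity)
    _ = (r:ℝ)/2 * (X^(r+1) - Y^(r+1))^2 := by rw [e2]; ring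

lemma aux_rpow_pow (c : ℝ) (hc : 0 ≤ c) (e : ℝ) (k : ℕ) : (c ^ e) ^ k = c ^ (e * k) := by
  rw [← Real.rpow_natCast (c ^ e) k, ← Real.rpow_mul hc]

set_option maxHeartbeats 2000000 in
theorem stmt_12 (r j : ℕ) (hr : 2 ≤ r) (N p q : ℕ) (hN : 0 < N)
    (hp : 0 < p) (hq : 0 < q) (hfac : N = p ^ r * q)
    (B : ℝ) (hB : B = (N : ℝ) ^ ((1 : ℝ) / (r + 2)) * 2 ^ (-(2 * (r : ℝ) + 1) * j / 3))
    (hB1 : 1 < B)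
    (hplo : (2 : ℝ) ^ (j : ℕ) * (N : ℝ) ^ ((1 : ℝ) / (r + 2)) ≤ p)
    (hphi : (p : ℝ) ≤ 2 ^ (j + 1) * (N : ℝ) ^ ((1 : ℝ) / (r + 2))) :
    ∃ a b : ℕ, 0 < a ∧ 0 < b ∧
      (a : ℝ) ≤ ⌈(2 : ℝ) ^ (((r : ℝ) + 2) * j / 3 + r + 1)⌉ ∧
      (b : ℝ) ≤ B ∧
      (a : ℝ) * q + r * b * p - (r + 1) * ((a : ℝ) * b ^ r * N) ^ ((1 : ℝ) / (r + 1))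
        < (r : ℝ) ^ ((r : ℝ) + 3 / 2) / Real.sqrt (a * b) * (N : ℝ) ^ ((1 : ℝ) / (2 * (r + 2)))
            * 2 ^ ((1 - (r : ℝ)) * j / 6 - 1) := by
  set γ : ℝ := 2 ^ ((j : ℝ) / 6) with hγdef
  set δ : ℝ := (N : ℝ) ^ ((1 : ℝ) / (2 * ((r : ℝ) + 2))) with hδdef
  have hγ0 : 0 < γ := Real.rpow_pos_of_pos two_pos _
  have hγ1 : 1 ≤ γ := by
    rw [hγdef, ← Real.rpow_zero 2]
    exact Real.rpow_le_rpow_of_exponent_le one_le_two (by positivity)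
  have hN1 : (1 : ℝ) ≤ N := by exact_mod_cast hN
  have hδ0 : 0 < δ := Real.rpow_pos_of_pos (by linarith) _
  have hδ1 : 1 ≤ δ := Real.one_le_rpow hN1 (by positivity)
  have hγ6 : γ ^ (6 : ℕ) = 2 ^ (j : ℕ) := by
    rw [hγdef, aux_rpow_pow _ (by norm_num), ← Real.rpow_natCast 2 j]
    norm_num
  have hδN : δ ^ (2 * r + 4) = (N : ℝ) := by
    rw [hδdef, aux_rpow_pow _ (by linarith)]
    rw [show (1 : ℝ) / (2 * ((r : ℝ) + 2)) * (2 * r + 4 : ℕ) = 1 by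
      push_cast; field_simp; ring]
    exact Real.rpow_one _
  have hδ2 : δ ^ (2 : ℕ) = (N : ℝ) ^ ((1 : ℝ) / (r + 2)) := by
    rw [hδdef, aux_rpow_pow _ (by linarith)]
    congr 1
    push_cast
    field_simp
  have hγB : (2 : ℝ) ^ (-(2 * (r : ℝ) + 1) * j / 3) = (γ ^ (4 * r + 2 : ℕ))⁻¹ := by
    rw [hγdef, aux_rpow_pow _ (by norm_num), ← Real.rpow_neg (by norm_num)]
    congr 1
    push_cast
    ring
  have hB' : B = δ ^ 2 * (γ ^ (4 * r + 2)) ⁻¹ := by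
    rw [hB, ← hδ2, hγB]
  have hp_lo : γ ^ 6 * δ ^ 2 ≤ (p : ℝ) := by rw [hγ6, hδ2]; exact hplo
  have hp_hi : (p : ℝ) ≤ 2 * (γ ^ 6 * δ ^ 2) := by
    rw [hγ6, hδ2, ← mul_assoc, ← pow_succ']
    exact hphi
  have hq1 : (1 : ℝ) ≤ q := by exact_mod_cast hq
  have hp1 : (1 : ℝ) ≤ p := by exact_mod_cast hp
  have hNfac : (q : ℝ) * (p : ℝ) ^ r = δ ^ (2 * r + 4) := by
    rw [hδN]
    push_cast [hfac]
    ring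
  have hD1 : (q : ℝ) * γ ^ (6 * r) ≤ δ ^ 4 := by
    have h1 : (q : ℝ) * (γ ^ 6 * δ ^ 2) ^ r ≤ (q : ℝ) * (p : ℝ) ^ r := by
      gcongr
    rw [hNfac] at h1
    have h2 : (q : ℝ) * (γ ^ 6 * δ ^ 2) ^ r = (q * γ ^ (6 * r)) * δ ^ (2 * r) := by
      rw [mul_pow, ← pow_mul, ← pow_mul]; ring
    have h3 : δ ^ (2 * r + 4) = δ ^ 4 * δ ^ (2 * r) := by ring
    rw [h2, h3] at h1
    exact le_of_mul_le_mul_right h1 (by positivity)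
  have hB0 : 0 < B := lt_trans one_pos hB1
  set m : ℕ := ⌊B⌋₊ with hmdef
  have hm1 : 1 ≤ m := Nat.le_floor (by exact_mod_cast hB1.le)
  have hmB : (m : ℝ) ≤ B := Nat.floor_le hB0.le
  have hBm1 : B < (m : ℝ) + 1 := Nat.lt_floor_add_one B
  have hm0R : (0 : ℝ) < (m : ℝ) + 1 := by positivity
  -- q ≤ B p
  have hq_div : (q : ℝ) * γ ^ (4 * r + 2) ≤ δ ^ 2 * p := by
    calc (q : ℝ) * γ ^ (4 * r + 2) ≤ (q : ℝ) * γ ^ (6 * r) := by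
          gcongr
          omega
      _ ≤ δ ^ 4 := hD1
      _ = δ ^ 2 * δ ^ 2 := by ring
      _ ≤ δ ^ 2 * p := by
          gcongr
          calc δ ^ 2 = 1 * δ ^ 2 := by ring
            _ ≤ γ ^ 6 * δ ^ 2 := by
                gcongr
                calc (1:ℝ) = 1 ^ 6 := by norm_num
                  _ ≤ γ ^ 6 := pow_le_pow_left₀ (by norm_num) hγ1 6
            _ ≤ p := hp_lo
  have hqBp : (q : ℝ) ≤ B * p := by
    rw [hB']
    rw [show δ ^ 2 * (γ ^ (4 * r + 2))⁻¹ * p = δ ^ 2 * p / γ ^ (4 * r + 2) by ring]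
    rw [le_div_iff₀ (by positivity)]
    exact hq_div
  -- Dirichlet
  obtain ⟨a', k, hk0, hkm, happ⟩ :=
    Real.exists_int_int_abs_mul_sub_le ((p : ℝ) / q) (show 0 < m by omega)
  have hq0R : (0 : ℝ) < q := by linarith
  have hp0R : (0 : ℝ) < p := by linarith
  have hkR : (1 : ℝ) ≤ (k : ℝ) := by exact_mod_cast hk0
  have hkmR : (k : ℝ) ≤ (m : ℝ) := by exact_mod_cast hkm
  have hξpos : 1 / ((m : ℝ) + 1) < (p : ℝ) / q := by
    rw [div_lt_div_iff₀ hm0R hq0R]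
    have : (q : ℝ) < ((m : ℝ) + 1) * p := by
      calc (q : ℝ) ≤ B * p := hqBp
        _ < ((m : ℝ) + 1) * p := by gcongr
    linarith
  have ha'pos : 0 < a' := by
    have h1 : (k : ℝ) * ((p : ℝ) / q) - a' ≤ 1 / ((m : ℝ) + 1) := (abs_le.mp happ).2
    have h2 : (p : ℝ) / q ≤ (k : ℝ) * ((p : ℝ) / q) := le_mul_of_one_le_left (by positivity) hkR
    have : (0 : ℝ) < a' := by linarith
    exact_mod_cast this
  set a : ℕ := a'.toNat with hadef
  set b : ℕ := k.toNat with hbdef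
  have haR : ((a : ℕ) : ℝ) = (a' : ℝ) := by
    rw [hadef]; exact_mod_cast Int.toNat_of_nonneg ha'pos.le
  have hbR : ((b : ℕ) : ℝ) = (k : ℝ) := by
    rw [hbdef]; exact_mod_cast Int.toNat_of_nonneg hk0.le
  have ha0 : 0 < a := by rw [hadef]; omega
  have hb0 : 0 < b := by rw [hbdef]; omega
  have ha1R : (1 : ℝ) ≤ (a : ℝ) := by rw [haR]; exact_mod_cast ha'pos
  have hb1R : (1 : ℝ) ≤ (b : ℝ) := by rw [hbR]; exact hkR
  have hbB : (b : ℝ) ≤ B := by rw [hbR]; linarith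
  have habs : |(a : ℝ) * q - (b : ℝ) * p| ≤ (q : ℝ) / ((m : ℝ) + 1) := by
    have h2 : (b : ℝ) * p - (a : ℝ) * q = ((k : ℝ) * ((p : ℝ) / q) - a') * q := by
      rw [haR, hbR]; field_simp
    rw [abs_sub_comm, h2, abs_mul, abs_of_pos hq0R]
    calc |(k : ℝ) * ((p : ℝ) / q) - a'| * q ≤ 1 / ((m : ℝ) + 1) * q := by gcongr
      _ = (q : ℝ) / ((m : ℝ) + 1) := by ring
  -- a upper bound
  have hc : (2 : ℝ) ^ (((r : ℝ) + 2) * j / 3 + r + 1) = 2 ^ (r + 1 : ℕ) * γ ^ (2 * r + 4 : ℕ) := by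
    rw [hγdef, aux_rpow_pow _ (by norm_num), ← Real.rpow_natCast 2 (r + 1),
      ← Real.rpow_add two_pos]
    congr 1
    push_cast
    ring
  have hBp : B * (p : ℝ) ^ (r + 1) ≤ 2 ^ (r + 1 : ℕ) * γ ^ (2 * r + 4) * δ ^ (2 * r + 4) := by
    calc B * (p : ℝ) ^ (r + 1) ≤ B * (2 * (γ ^ 6 * δ ^ 2)) ^ (r + 1) := by
          gcongr
      _ = (δ ^ 2 * (γ ^ (4 * r + 2))⁻¹) * (2 * (γ ^ 6 * δ ^ 2)) ^ (r + 1) := by rw [← hB']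
      _ = 2 ^ (r + 1 : ℕ) * γ ^ (2 * r + 4) * δ ^ (2 * r + 4) := by
          field_simp
          ring
  have hBpq : B * ((p : ℝ) / q) ≤ 2 ^ (r + 1 : ℕ) * γ ^ (2 * r + 4) := by
    have h1 : B * (p : ℝ) * (p : ℝ) ^ r ≤ (2 ^ (r + 1 : ℕ) * γ ^ (2 * r + 4) * q) * (p : ℝ) ^ r := by
      calc B * (p : ℝ) * (p : ℝ) ^ r = B * (p : ℝ) ^ (r + 1) := by ring
        _ ≤ 2 ^ (r + 1 : ℕ) * γ ^ (2 * r + 4) * δ ^ (2 * r + 4) := hBp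
        _ = (2 ^ (r + 1 : ℕ) * γ ^ (2 * r + 4) * q) * (p : ℝ) ^ r := by
            rw [← hNfac]; ring
    have h2 : B * (p : ℝ) ≤ 2 ^ (r + 1 : ℕ) * γ ^ (2 * r + 4) * q :=
      le_of_mul_le_mul_right h1 (by positivity)
    rw [show B * ((p : ℝ) / q) = B * p / q by ring, div_le_iff₀ hq0R]
    exact h2
  have hgoal3 : (a : ℝ) ≤ ((⌈(2 : ℝ) ^ (((r : ℝ) + 2) * j / 3 + r + 1)⌉ : ℤ) : ℝ) := by
    have h1 : (a' : ℝ) - k * ((p : ℝ) / q) ≤ 1 / ((m : ℝ) + 1) := by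
      have := (abs_le.mp happ).1; linarith
    have h2 : (k : ℝ) * ((p : ℝ) / q) ≤ B * ((p : ℝ) / q) := by
      have : (k : ℝ) ≤ B := by linarith
      gcongr
    have h3 : 1 / ((m : ℝ) + 1) ≤ 1 / 2 := by
      apply one_div_le_one_div_of_le (by norm_num)
      have : (1 : ℝ) ≤ m := by exact_mod_cast hm1
      linarith
    have key : ((a : ℤ) - 1 : ℤ) < ⌈(2 : ℝ) ^ (((r : ℝ) + 2) * j / 3 + r + 1)⌉ := by
      rw [Int.lt_ceil, hc]
      push_cast
      rw [haR]
      linarith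
    have : (a : ℤ) ≤ ⌈(2 : ℝ) ^ (((r : ℝ) + 2) * j / 3 + r + 1)⌉ := by omega
    exact_mod_cast this
  -- main inequality
  have hr1R : (1 : ℝ) ≤ (r : ℝ) := by
    have : (2:ℝ) ≤ r := by exact_mod_cast hr
    linarith
  have hr0R : (0 : ℝ) < (r : ℝ) := by linarith
  set K : ℝ := (r : ℝ) ^ ((r : ℝ) + 3 / 2) with hKdef
  have hK0 : 0 < K := Real.rpow_pos_of_pos hr0R _
  set E : ℝ := (2 : ℝ) ^ ((1 - (r : ℝ)) * j / 6 - 1) with hEdef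
  have hE0 : 0 < E := Real.rpow_pos_of_pos two_pos _
  have hE : E * (2 * γ ^ r) = γ := by
    rw [hEdef, hγdef, aux_rpow_pow _ (by norm_num)]
    rw [show (2 : ℝ) * (2 : ℝ) ^ ((j : ℝ) / 6 * r) = 2 ^ (1 + (j : ℝ) / 6 * r) by
      rw [Real.rpow_add two_pos, Real.rpow_one]]
    rw [← Real.rpow_add two_pos]
    congr 1
    ring
  have hx0 : (0 : ℝ) < (a : ℝ) * q := by positivity
  have hy0 : (0 : ℝ) < (b : ℝ) * p := by positivity
  set x : ℝ := (a : ℝ) * q with hxdef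
  set y : ℝ := (b : ℝ) * p with hydef
  set X : ℝ := x ^ ((1 : ℝ) / ((r : ℝ) + 1)) with hXdef
  set Y : ℝ := y ^ ((1 : ℝ) / ((r : ℝ) + 1)) with hYdef
  have hX0 : 0 < X := Real.rpow_pos_of_pos hx0 _
  have hY0 : 0 < Y := Real.rpow_pos_of_pos hy0 _
  have hexp1 : (1 : ℝ) / ((r : ℝ) + 1) * ((r + 1 : ℕ) : ℝ) = 1 := by
    push_cast
    field_simp
  have hXx : X ^ (r + 1) = x := by
    rw [hXdef, aux_rpow_pow _ hx0.le, hexp1, Real.rpow_one]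
  have hYy : Y ^ (r + 1) = y := by
    rw [hYdef, aux_rpow_pow _ hy0.le, hexp1, Real.rpow_one]
  have habN : ((a : ℝ) * (b : ℝ) ^ r * N) = x * y ^ r := by
    have hN' : (N : ℝ) = (p : ℝ) ^ r * q := by exact_mod_cast hfac
    rw [hN', hxdef, hydef]
    ring
  have hxyX : (x * y ^ r) ^ ((1 : ℝ) / ((r : ℝ) + 1)) = X * Y ^ r := by
    rw [Real.mul_rpow hx0.le (by positivity), hYdef, aux_rpow_pow _ hy0.le]
    rw [← Real.rpow_natCast y r, ← Real.rpow_mul hy0.le]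
    congr 1
    ring
  have hmain : (a : ℝ) * q + r * b * p - (r + 1) * ((a : ℝ) * b ^ r * N) ^ ((1 : ℝ) / (r + 1))
      < K / Real.sqrt ((a : ℝ) * b) * δ * E := by
    have hgLHS : (a : ℝ) * q + (r : ℝ) * b * p
        - ((r : ℝ) + 1) * ((a : ℝ) * (b : ℝ) ^ r * N) ^ ((1 : ℝ) / ((r : ℝ) + 1))
        = X ^ (r + 1) + (r : ℝ) * Y ^ (r + 1) - ((r : ℝ) + 1) * (X * Y ^ r) := by
      rw [habN, hxyX, hXx, hYy, hxdef, hydef]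
      ring
    rw [hgLHS]
    have hsq : (x - y) ^ 2 ≤ ((q : ℝ) / ((m : ℝ) + 1)) ^ 2 := by
      rw [← sq_abs]
      apply pow_le_pow_left₀ (abs_nonneg _) _ 2
      rw [hxdef, hydef]
      exact habs
    calc X ^ (r + 1) + (r : ℝ) * Y ^ (r + 1) - ((r : ℝ) + 1) * (X * Y ^ r)
        ≤ (r : ℝ) / 2 * (X ^ (r + 1) - Y ^ (r + 1)) ^ 2 / X ^ (r + 1) :=
          aux_F_bound r hr X Y hX0 hY0
      _ = (r : ℝ) / 2 * (x - y) ^ 2 / x := by rw [hXx, hYy]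
      _ ≤ (r : ℝ) / 2 * ((q : ℝ) / ((m : ℝ) + 1)) ^ 2 / x := by gcongr
      _ < (r : ℝ) / 2 * ((q : ℝ) / B) ^ 2 / x := by
          have h1 : (q : ℝ) / ((m : ℝ) + 1) < (q : ℝ) / B :=
            div_lt_div_of_pos_left hq0R hB0 hBm1
          have h2 : ((q : ℝ) / ((m : ℝ) + 1)) ^ 2 < ((q : ℝ) / B) ^ 2 :=
            pow_lt_pow_left₀ h1 (by positivity) two_ne_zero
          have h3 : (r : ℝ) / 2 * ((q : ℝ) / ((m : ℝ) + 1)) ^ 2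
              < (r : ℝ) / 2 * ((q : ℝ) / B) ^ 2 :=
            mul_lt_mul_of_pos_left h2 (by positivity)
          exact (div_lt_div_iff_of_pos_right hx0).mpr h3
      _ ≤ K / Real.sqrt ((a : ℝ) * b) * δ * E := by
          set L : ℝ := (r : ℝ) / 2 * ((q : ℝ) / B) ^ 2 / x with hLdef
          set R : ℝ := K / Real.sqrt ((a : ℝ) * b) * δ * E with hRdef
          have hsab0 : (0 : ℝ) < Real.sqrt ((a : ℝ) * b) := Real.sqrt_pos.mpr (by positivity)
          have hL0 : 0 ≤ L := by rw [hLdef]; positivity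
          have hR0 : 0 ≤ R := by rw [hRdef]; positivity
          have hK2 : K ^ 2 = (r : ℝ) ^ (2 * r + 3 : ℕ) := by
            rw [hKdef, aux_rpow_pow _ hr0R.le, ← Real.rpow_natCast (r : ℝ) (2 * r + 3)]
            congr 1
            push_cast
            ring
          have hE2γ : E ^ 2 * (4 * γ ^ (2 * r)) = γ ^ 2 := by
            calc E ^ 2 * (4 * γ ^ (2 * r)) = (E * (2 * γ ^ r)) ^ 2 := by ring
              _ = γ ^ 2 := by rw [hE]
          have hB4 : B ^ 4 * γ ^ (16 * r + 8) = δ ^ 8 := by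
            rw [hB']
            field_simp
            ring
          have hEB : E ^ 2 * B ^ 4 * γ ^ (18 * r + 8) * 4 = γ ^ 2 * δ ^ 8 := by
            calc E ^ 2 * B ^ 4 * γ ^ (18 * r + 8) * 4
                = (E ^ 2 * (4 * γ ^ (2 * r))) * (B ^ 4 * γ ^ (16 * r + 8)) := by ring
              _ = γ ^ 2 * δ ^ 8 := by rw [hE2γ, hB4]
          have hTmain : (r : ℝ) ^ 2 * (q : ℝ) ^ 2 * (b : ℝ) * γ ^ (18 * r + 8)
              ≤ (r : ℝ) ^ (2 * r + 3) * δ ^ 10 * γ ^ 2 * (a : ℝ) := by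
            rcases Nat.eq_zero_or_pos j with hj | hj
            · have hγe : γ = 1 := by rw [hγdef, hj]; norm_num
              have hqδ : (q : ℝ) ≤ δ ^ 4 := by
                have h := hD1
                rw [hγe] at h
                simpa using h
              have hbδ : (b : ℝ) ≤ δ ^ 2 := by
                have hBδ : B = δ ^ 2 := by rw [hB', hγe]; simp
                rw [← hBδ]
                exact hbB
              have hrr : (r : ℝ) ^ 2 ≤ (r : ℝ) ^ (2 * r + 3) :=
                pow_le_pow_right₀ hr1R (by omega)
              rw [hγe]
              simp only [one_pow, mul_one]
              calc (r : ℝ) ^ 2 * (q : ℝ) ^ 2 * (b : ℝ)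
                  ≤ (r : ℝ) ^ (2 * r + 3) * (δ ^ 4) ^ 2 * (δ ^ 2) := by gcongr
                _ = (r : ℝ) ^ (2 * r + 3) * δ ^ 10 := by ring
                _ ≤ (r : ℝ) ^ (2 * r + 3) * δ ^ 10 * (a : ℝ) :=
                    le_mul_of_one_le_right (by positivity) ha1R
            · have hγ62 : (2 : ℝ) ≤ γ ^ 6 := by
                rw [hγ6]
                calc (2 : ℝ) = 2 ^ 1 := by norm_num
                  _ ≤ 2 ^ j := pow_le_pow_right₀ one_le_two hj
              have h2q : 2 * (q : ℝ) ≤ B * p := by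
                have h1 : 2 * (q : ℝ) * γ ^ (4 * r + 2) ≤ δ ^ 2 * p := by
                  calc 2 * (q : ℝ) * γ ^ (4 * r + 2)
                      = 2 * ((q : ℝ) * γ ^ (4 * r + 2)) := by ring
                    _ ≤ γ ^ (2 * r + 4) * ((q : ℝ) * γ ^ (4 * r + 2)) := by
                        gcongr
                        exact le_trans hγ62 (pow_le_pow_right₀ hγ1 (by omega))
                    _ = (q : ℝ) * γ ^ (6 * r) * γ ^ 6 := by ring
                    _ ≤ δ ^ 4 * γ ^ 6 := by gcongr
                    _ = δ ^ 2 * (γ ^ 6 * δ ^ 2) := by ring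
                    _ ≤ δ ^ 2 * p := by gcongr
                rw [hB', show δ ^ 2 * (γ ^ (4 * r + 2))⁻¹ * (p : ℝ) = δ ^ 2 * p / γ ^ (4 * r + 2) by
                  ring, le_div_iff₀ (by positivity)]
                exact h1
              have hbp2aq : (b : ℝ) * p ≤ 2 * ((a : ℝ) * q) := by
                have h1 : (b : ℝ) * p - (a : ℝ) * q ≤ (q : ℝ) / ((m : ℝ) + 1) := by
                  have h := abs_le.mp habs
                  linarith [h.1]
                have h2 : (q : ℝ) / ((m : ℝ) + 1) ≤ (q : ℝ) / B := by
                  gcongr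
                have h3 : (q : ℝ) / B ≤ (p : ℝ) / 2 := by
                  rw [div_le_div_iff₀ hB0 (by norm_num)]
                  linarith
                have h4 : (p : ℝ) ≤ (b : ℝ) * p := le_mul_of_one_le_left hp0R.le hb1R
                linarith
              have hq3 : (q : ℝ) ^ 3 * γ ^ (18 * r) ≤ δ ^ 12 := by
                calc (q : ℝ) ^ 3 * γ ^ (18 * r) = ((q : ℝ) * γ ^ (6 * r)) ^ 3 := by ring
                  _ ≤ (δ ^ 4) ^ 3 := by gcongr <;> positivity
                  _ = δ ^ 12 := by ring
              have h2r : 2 * (r : ℝ) ^ 2 ≤ (r : ℝ) ^ (2 * r + 3) := by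
                have h1 : (2 : ℝ) ≤ r := by exact_mod_cast hr
                calc 2 * (r : ℝ) ^ 2 ≤ (r : ℝ) * (r : ℝ) ^ 2 := by gcongr
                  _ = (r : ℝ) ^ 3 := by ring
                  _ ≤ (r : ℝ) ^ (2 * r + 3) := pow_le_pow_right₀ hr1R (by omega)
              have hTp : ((r : ℝ) ^ 2 * (q : ℝ) ^ 2 * (b : ℝ) * γ ^ (18 * r + 8)) * p
                  ≤ ((r : ℝ) ^ (2 * r + 3) * δ ^ 10 * γ ^ 2 * (a : ℝ)) * p := by
                calc ((r : ℝ) ^ 2 * (q : ℝ) ^ 2 * (b : ℝ) * γ ^ (18 * r + 8)) * p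
                    = (r : ℝ) ^ 2 * (q : ℝ) ^ 2 * γ ^ (18 * r + 8) * ((b : ℝ) * p) := by ring
                  _ ≤ (r : ℝ) ^ 2 * (q : ℝ) ^ 2 * γ ^ (18 * r + 8) * (2 * ((a : ℝ) * q)) := by
                      gcongr
                  _ = (2 * (r : ℝ) ^ 2) * ((q : ℝ) ^ 3 * γ ^ (18 * r)) * γ ^ 8 * (a : ℝ) := by
                      ring
                  _ ≤ (2 * (r : ℝ) ^ 2) * δ ^ 12 * γ ^ 8 * (a : ℝ) := by gcongr
                  _ ≤ ((r : ℝ) ^ (2 * r + 3)) * δ ^ 12 * γ ^ 8 * (a : ℝ) := by gcongr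
                  _ = (r : ℝ) ^ (2 * r + 3) * δ ^ 10 * γ ^ 2 * (a : ℝ) * (γ ^ 6 * δ ^ 2) := by
                      ring
                  _ ≤ (r : ℝ) ^ (2 * r + 3) * δ ^ 10 * γ ^ 2 * (a : ℝ) * p := by gcongr
              exact le_of_mul_le_mul_right hTp hp0R
          have hL2 : L ^ 2 = (r : ℝ) ^ 2 * (q : ℝ) ^ 2 / (4 * B ^ 4 * (a : ℝ) ^ 2) := by
            rw [hLdef, hxdef]
            field_simp
            ring
          have hR2 : R ^ 2 = K ^ 2 * δ ^ 2 * E ^ 2 / ((a : ℝ) * b) := by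
            rw [hRdef, mul_pow, mul_pow, div_pow, Real.sq_sqrt (by positivity : (0:ℝ) ≤ (a : ℝ) * b)]
            ring
          have hsqle : L ^ 2 ≤ R ^ 2 := by
            rw [hL2, hR2, div_le_div_iff₀ (by positivity) (by positivity)]
            rw [← mul_le_mul_iff_of_pos_right (show (0:ℝ) < γ ^ (18 * r + 8) by positivity)]
            calc (r : ℝ) ^ 2 * (q : ℝ) ^ 2 * ((a : ℝ) * b) * γ ^ (18 * r + 8)
                = ((r : ℝ) ^ 2 * (q : ℝ) ^ 2 * (b : ℝ) * γ ^ (18 * r + 8)) * (a : ℝ) := by ring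
              _ ≤ ((r : ℝ) ^ (2 * r + 3) * δ ^ 10 * γ ^ 2 * (a : ℝ)) * (a : ℝ) := by
                  gcongr
              _ = K ^ 2 * δ ^ 2 * E ^ 2 * (4 * B ^ 4 * (a : ℝ) ^ 2) * γ ^ (18 * r + 8) := by
                  rw [hK2]
                  linear_combination (-((r : ℝ) ^ (2 * r + 3) * δ ^ 2 * (a : ℝ) ^ 2)) * hEB
          calc L = Real.sqrt (L ^ 2) := (Real.sqrt_sq hL0).symm
            _ ≤ Real.sqrt (R ^ 2) := Real.sqrt_le_sqrt hsqle
            _ = R := Real.sqrt_sq hR0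
  exact ⟨a, b, ha0, hb0, hgoal3, hbB, hmain⟩
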